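/- Let g ≥ 2 and let π_g be the genus-g surface group. The level of a nontrivial element is a conjugacy invariant: suppose h₁, h₂ ∈ π_g are nontrivial and conjugate in π_g, and suppose k₁, k₂ ∈ π_g satisfy Subgroup.centralizer {hᵢ} = Subgroup.zpowers kᵢ for i = 1,2, and l₁, l₂ ∈ ℤ satisfy h₁ = k₁^{l₁} and h₂ = k₂^{l₂}. Then |l₁| = |l₂|. -/

import Mathlib

open Subgroup Function
open scoped commutatorElement

/-- A monoid is torsion-free if no nontrivial element has finite order. -/
def Monoid.IsTorsionFree (G : Type*) [Monoid G] : Prop :=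
  ∀ g : G, g ≠ 1 → ¬IsOfFinOrder g

namespace HNNTorsion

variable {G : Type*} [Group G] {A B : Subgroup G} {φ : A ≃* B}

open HNNExtension HNNExtension.NormalWord

theorem conj_pow_helper {H : Type*} [Group H] (a x : H) (n : ℕ) :
    (a⁻¹ * x * a) ^ n = a⁻¹ * x ^ n * a := by
  induction n with
  | zero => simp
  | succ n ihn => rw [pow_succ, pow_succ, ihn]; group

/-- product of a list of `t^u * g` factors -/
def prodList (L : List (ℤˣ × G)) : HNNExtension G A B φ :=
  (L.map fun (x : ℤˣ × G) => (t ^ (x.1 : ℤ) * of x.2 : HNNExtension G A B φ)).prod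

/-- the reducedness predicate on adjacent letters -/
def Pred (A B : Subgroup G) : (ℤˣ × G) → (ℤˣ × G) → Prop :=
  fun a b => a.2 ∈ toSubgroup A B a.1 → a.1 = b.1

theorem prodList_nil : (prodList [] : HNNExtension G A B φ) = 1 := rfl

theorem prodList_append (L₁ L₂ : List (ℤˣ × G)) :
    (prodList (L₁ ++ L₂) : HNNExtension G A B φ) = prodList L₁ * prodList L₂ := by
  simp [prodList]

theorem prodList_cons (a : ℤˣ × G) (L : List (ℤˣ × G)) :
    (prodList (a :: L) : HNNExtension G A B φ) = t ^ (a.1 : ℤ) * of a.2 * prodList L := by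
  simp [prodList]

theorem prodList_singleton (a : ℤˣ × G) :
    (prodList [a] : HNNExtension G A B φ) = t ^ (a.1 : ℤ) * of a.2 := by
  simp [prodList]

theorem t_zpow_mul_of (u : ℤˣ) (a : toSubgroup A B u) :
    (t ^ (u : ℤ) : HNNExtension G A B φ) * of (a : G)
      = of ((toSubgroupEquiv φ u a : G)) * t ^ (u : ℤ) := by
  rcases Int.units_eq_one_or u with rfl | rfl
  · simp only [Units.val_one, zpow_one]; exact t_mul_of (φ := φ) a
  · simp only [Units.val_neg, Units.val_one, zpow_neg, zpow_one]; exact inv_t_mul_of (φ := φ) a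

/-- Britton's lemma, corollary form -/
theorem britton (h : G) (L : List (ℤˣ × G)) (hL : L ≠ [])
    (chain : L.Chain' (Pred A B)) :
    (of h * prodList L : HNNExtension G A B φ) ≠ 1 := by
  intro heq
  have := ReducedWord.toList_eq_nil_of_mem_of_range φ ⟨h, L, chain⟩
    (by
      show (ReducedWord.prod φ _) ∈ _
      have : ReducedWord.prod φ ⟨h, L, chain⟩ = of h * prodList L := rfl
      rw [this, heq]
      exact one_mem _)
  exact hL this

theorem units_eq_of_ne_neg {u v : ℤˣ} (h : u ≠ -v) : u = v := by
  rcases Int.units_eq_one_or u with rfl | rfl <;>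
    rcases Int.units_eq_one_or v with rfl | rfl <;> simp_all

theorem chain'_concat_congr {α : Type*} {P : α → α → Prop} (l : List α) (a b : α)
    (hab : ∀ c, P c a → P c b) (h : (l ++ [a]).Chain' P) : (l ++ [b]).Chain' P := by
  unfold List.Chain' at h ⊢
  rw [List.isChain_append] at h ⊢
  refine ⟨h.1, List.isChain_singleton b, ?_⟩
  intro x hx y hy
  simp only [List.head?_cons, Option.mem_def, Option.some.injEq] at hy
  subst hy
  exact hab x (h.2.2 x hx a rfl)

/-- powers of a cyclically reduced word are nontrivial -/
theorem pow_ne_one_of_cyclically_reduced (K : List (ℤˣ × G)) (a0 b0 : ℤˣ × G)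
    (hhead : K.head? = some b0) (hlast : K.getLast? = some a0)
    (chain : K.Chain' (Pred A B)) (hP : Pred A B a0 b0) :
    ∀ n : ℕ, 0 < n → (prodList K : HNNExtension G A B φ) ^ n ≠ 1 := by
  have hKne : K ≠ [] := by rintro rfl; simp at hhead
  have main : ∀ n : ℕ, ∃ J : List (ℤˣ × G), J.Chain' (Pred A B) ∧ J.head? = some b0 ∧
      (prodList K : HNNExtension G A B φ) ^ (n + 1) = prodList J ∧ J ≠ [] := by
    intro n
    induction n with
    | zero => exact ⟨K, chain, hhead, by simp, hKne⟩
    | succ n ihn =>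
      obtain ⟨J, chJ, hJhead, hJprod, hJne⟩ := ihn
      refine ⟨K ++ J, ?_, ?_, ?_, by simp [hKne]⟩
      · unfold List.Chain'
        rw [List.isChain_append]
        refine ⟨chain, chJ, ?_⟩
        intro x hx y hy
        rw [hlast] at hx
        rw [hJhead] at hy
        cases hx; cases hy; exact hP
      · rw [List.head?_append, hhead]; rfl
      · rw [prodList_append, ← hJprod, pow_succ']
  intro n hn heq
  obtain ⟨m, rfl⟩ : ∃ m, n = m + 1 := ⟨n - 1, by omega⟩
  obtain ⟨J, chJ, hJhead, hJprod, hJne⟩ := main m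
  have : (of (1 : G) * prodList J : HNNExtension G A B φ) = 1 := by
    rw [map_one, one_mul, ← hJprod, heq]
  exact britton 1 J hJne chJ this

theorem key (hG : Monoid.IsTorsionFree G) :
    ∀ (N : ℕ) (L : List (ℤˣ × G)), L.length ≤ N → L.Chain' (Pred A B) →
      ∀ (h : G) (n : ℕ), 0 < n → (of h * prodList L : HNNExtension G A B φ) ^ n = 1 →
        (of h * prodList L : HNNExtension G A B φ) = 1 := by
  intro N
  induction N with
  | zero =>
    intro L hlen _ h n hn hpow
    have hL : L = [] := List.eq_nil_of_length_eq_zero (Nat.le_zero.1 hlen)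
    subst hL
    simp only [prodList, List.map_nil, List.prod_nil, mul_one] at hpow ⊢
    rw [← map_pow] at hpow
    have h1 : h ^ n = 1 := HNNExtension.of_injective (φ := φ)
      (show of (h ^ n) = of 1 by rw [hpow, map_one])
    by_cases hh : h = 1
    · simp [hh]
    · exact absurd (isOfFinOrder_iff_pow_eq_one.2 ⟨n, hn, h1⟩) (hG h hh)
  | succ N ih =>
    intro L hlen chain h n hn hpow
    match L, hlen, chain, hpow with
    | [], hlen, chain, hpow => exact ih [] (by simp) chain h n hn hpow
    | (u₁, g₁) :: L₂, hlen, chain, hpow =>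
      rcases List.eq_nil_or_concat L₂ with rfl | ⟨M, ⟨um, gm⟩, rfl⟩
      · -- singleton: always cyclically reduced
        exfalso
        have hz : (of h)⁻¹ * (of h * prodList [(u₁, g₁)]) * of h
            = (prodList [(u₁, g₁ * h)] : HNNExtension G A B φ) := by
          simp only [prodList_singleton, map_mul, prodList_nil]
          group
        have hzn : (prodList [(u₁, g₁ * h)] : HNNExtension G A B φ) ^ n = 1 := by
          rw [← hz, conj_pow_helper, hpow]; simp
        exact pow_ne_one_of_cyclically_reduced [(u₁, g₁ * h)] (u₁, g₁ * h) (u₁, g₁ * h)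
          rfl rfl (List.isChain_singleton _) (fun _ => rfl) n hn hzn
      · -- L = (u₁,g₁) :: (M ++ [(um,gm)])
        rw [List.concat_eq_append] at hlen chain hpow ⊢
        set K : List (ℤˣ × G) := (u₁, g₁) :: (M ++ [(um, gm * h)]) with hKdef
        have hchainK : K.Chain' (Pred A B) := by
          have : (((u₁, g₁) :: M) ++ [(um, gm * h)]).Chain' (Pred A B) :=
            chain'_concat_congr _ (um, gm) (um, gm * h) (fun c hc => hc) (by simpa using chain)
          simpa using this
        have hz : (of h)⁻¹ * (of h * prodList ((u₁, g₁) :: (M ++ [(um, gm)]))) * of h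
            = (prodList K : HNNExtension G A B φ) := by
          rw [hKdef]
          simp only [prodList_cons, prodList_append, prodList_singleton, prodList_nil, map_mul]
          group
        have hzn : (prodList K : HNNExtension G A B φ) ^ n = 1 := by
          rw [← hz, conj_pow_helper, hpow]; simp
        by_cases hc : gm * h ∈ toSubgroup A B um ∧ um = -u₁
        · -- cancellation case
          obtain ⟨hmem, hu⟩ := hc
          set c : toSubgroup A B um := ⟨gm * h, hmem⟩ with hcdef
          set w : G := ((toSubgroupEquiv φ um c : G)) with hwdef
          have key1 : (t : HNNExtension G A B φ) ^ (um : ℤ) * of (gm * h)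
              = of w * t ^ (um : ℤ) := t_zpow_mul_of um c
          have ht1 : (t : HNNExtension G A B φ) ^ (u₁ : ℤ) = (t ^ (um : ℤ))⁻¹ := by
            rw [hu]
            push_cast
            rw [zpow_neg, inv_inv]
          have hx2 : (t ^ (u₁ : ℤ))⁻¹ * (prodList K : HNNExtension G A B φ) * t ^ (u₁ : ℤ)
              = of g₁ * prodList M * of w := by
            rw [hKdef]
            simp only [prodList_cons, prodList_append, prodList_singleton, prodList_nil]
            rw [ht1, ← mul_assoc]
            rw [show ((t : HNNExtension G A B φ) ^ ((um, gm * h).1 : ℤ) *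
              of (um, gm * h).2) = of w * t ^ (um : ℤ) from key1]
            group
          -- from x₂ = 1 conclude the original is 1
          have back : ∀ y : HNNExtension G A B φ,
              (t ^ (u₁ : ℤ))⁻¹ * (prodList K : HNNExtension G A B φ) * t ^ (u₁ : ℤ) = y → y = 1 →
              (of h * prodList ((u₁, g₁) :: (M ++ [(um, gm)])) : HNNExtension G A B φ) = 1 := by
            intro y h1 h2
            rw [h2] at h1
            have hK1 : (prodList K : HNNExtension G A B φ) = 1 := by
              have := congrArg (fun z => (t : HNNExtension G A B φ) ^ (u₁ : ℤ) * z *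
                ((t : HNNExtension G A B φ) ^ (u₁ : ℤ))⁻¹) h1
              simpa [mul_assoc] using this
            rw [← hz] at hK1
            have := congrArg (fun z => of h * z * (of h)⁻¹) hK1
            simpa [mul_assoc] using this
          rcases List.eq_nil_or_concat M with rfl | ⟨M₀, ⟨v, k⟩, rfl⟩
          · -- M = []
            have hx2' : (t ^ (u₁ : ℤ))⁻¹ * (prodList K : HNNExtension G A B φ) * t ^ (u₁ : ℤ)
                = of (g₁ * w) * prodList ([] : List (ℤˣ × G)) := by
              rw [hx2]; simp [prodList, map_mul]
            refine back _ hx2' (ih [] (by simp) List.isChain_nil (g₁ * w) n hn ?_)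
            rw [← hx2', conj_pow_helper, hzn]; simp
          · -- M = M₀ ++ [(v,k)]
            simp only [List.concat_eq_append] at hx2 back chain hlen ⊢
            have hM : (prodList (M₀ ++ [(v, k)]) : HNNExtension G A B φ) * of w
                = prodList (M₀ ++ [(v, k * w)]) := by
              simp [prodList_append, prodList_singleton, map_mul, mul_assoc]
            have hx2' : (t ^ (u₁ : ℤ))⁻¹ * (prodList K : HNNExtension G A B φ) * t ^ (u₁ : ℤ)
                = of g₁ * prodList (M₀ ++ [(v, k * w)]) := by
              rw [hx2, mul_assoc, hM]
            have chM : ((M₀ ++ [(v, k)])).Chain' (Pred A B) := by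
              have h2 := (List.isChain_cons.1 chain).2
              exact (List.isChain_append.1 h2).1
            have chM' : (M₀ ++ [(v, k * w)]).Chain' (Pred A B) :=
              chain'_concat_congr M₀ (v, k) (v, k * w) (fun c hc => hc) chM
            have hlen' : (M₀ ++ [(v, k * w)]).length ≤ N := by
              simp only [List.length_cons, List.length_append, List.length_singleton] at hlen ⊢
              omega
            refine back _ hx2' (ih _ hlen' chM' g₁ n hn ?_)
            rw [← hx2', conj_pow_helper, hzn]; simp
        · -- no cancellation: cyclically reduced
          exfalso
          refine pow_ne_one_of_cyclically_reduced K (um, gm * h) (u₁, g₁) rfl ?_ hchainK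
            ?_ n hn hzn
          · rw [show K = ((u₁, g₁) :: M) ++ [(um, gm * h)] from rfl, List.getLast?_concat]
          · intro hmem
            exact units_eq_of_ne_neg (fun hne => hc ⟨hmem, hne⟩)

/-- HNN extensions of torsion-free groups are torsion-free. -/
theorem hnn_torsionFree (hG : Monoid.IsTorsionFree G) :
    Monoid.IsTorsionFree (HNNExtension G A B φ) := by
  intro x hx hfin
  obtain ⟨n, hn, hxn⟩ := isOfFinOrder_iff_pow_eq_one.1 hfin
  rcases TransversalPair.nonempty G A B with ⟨d⟩
  set word := (HNNExtension.NormalWord.equiv φ d) x with hword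
  have hxeq : x = of word.head * prodList word.toList := by
    have h1 : (HNNExtension.NormalWord.equiv φ d).symm word = x := by rw [hword]; simp
    rw [← h1]
    rfl
  apply hx
  rw [hxeq] at hxn ⊢
  exact key hG word.toList.length word.toList le_rfl word.chain word.head n hn hxn

theorem torsionFree_of_injective {H K : Type*} [Group H] [Group K] (f : H →* K)
    (hf : Function.Injective f) (hK : Monoid.IsTorsionFree K) : Monoid.IsTorsionFree H := by
  intro h hh hfin
  obtain ⟨n, hn, h1⟩ := isOfFinOrder_iff_pow_eq_one.1 hfin
  refine hK (f h) (fun h2 => hh (hf (by rw [h2, map_one]))) ?_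
  exact isOfFinOrder_iff_pow_eq_one.2 ⟨n, hn, by rw [← map_pow, h1, map_one]⟩

theorem torsionFree_of_subsingleton {H : Type*} [Group H] [Subsingleton H] :
    Monoid.IsTorsionFree H := fun h hh _ => hh (Subsingleton.elim _ _)

/-- `FreeGroup (Option β)` embeds into the HNN extension of `FreeGroup β` over trivial
subgroups, hence is torsion-free if `FreeGroup β` is. -/
theorem freeGroup_option_torsionFree {β : Type*} (hβ : Monoid.IsTorsionFree (FreeGroup β)) :
    Monoid.IsTorsionFree (FreeGroup (Option β)) := by
  set φ0 : (⊥ : Subgroup (FreeGroup β)) ≃* (⊥ : Subgroup (FreeGroup β)) := MulEquiv.refl _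
  set Φ : FreeGroup (Option β) →* HNNExtension (FreeGroup β) ⊥ ⊥ φ0 :=
    FreeGroup.lift (fun o => Option.elim o t (fun b => of (FreeGroup.of b))) with hΦ
  set base : FreeGroup β →* FreeGroup (Option β) :=
    FreeGroup.lift (fun b => FreeGroup.of (some b)) with hbase
  have hcond : ∀ a : (⊥ : Subgroup (FreeGroup β)),
      FreeGroup.of (none : Option β) * base ↑a = base ↑(φ0 a) * FreeGroup.of none := by
    rintro ⟨a, ha⟩
    have : a = 1 := Subgroup.mem_bot.1 ha
    simp [this, φ0]
  set Ψ : HNNExtension (FreeGroup β) ⊥ ⊥ φ0 →* FreeGroup (Option β) :=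
    HNNExtension.lift base (FreeGroup.of none) hcond with hΨ
  have hinj : Function.Injective Φ := by
    have hleft : Ψ.comp Φ = MonoidHom.id _ := by
      apply FreeGroup.ext_hom
      rintro (_ | b) <;> simp [hΦ, hΨ, hbase]
    intro x y hxy
    have := congrArg Ψ hxy
    calc x = Ψ.comp Φ x := by rw [hleft]; rfl
    _ = Ψ.comp Φ y := this
    _ = y := by rw [hleft]; rfl
  exact torsionFree_of_injective Φ hinj (hnn_torsionFree hβ)

theorem freeGroup_fin_torsionFree : ∀ n : ℕ, Monoid.IsTorsionFree (FreeGroup (Fin n)) := by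
  intro n
  induction n with
  | zero =>
    have : Subsingleton (FreeGroup (Fin 0)) := by
      constructor
      have hone : ∀ x : FreeGroup (Fin 0), x = 1 := by
        intro x
        induction x using FreeGroup.induction_on with
        | C1 => rfl
        | of a => exact a.elim0
        | inv_of a iha => exact a.elim0
        | mul x y ihx ihy => rw [ihx, ihy, one_mul]
      intro a b; rw [hone a, hone b]
    exact torsionFree_of_subsingleton
  | succ n ihn =>
    have e : FreeGroup (Fin (n + 1)) ≃* FreeGroup (Option (Fin n)) :=
      FreeGroup.freeGroupCongr (finSuccEquiv n)
    exact torsionFree_of_injective e.toMonoidHom e.injective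
      (freeGroup_option_torsionFree ihn)

theorem freeGroup_torsionFree (α : Type*) [Finite α] :
    Monoid.IsTorsionFree (FreeGroup α) := by
  obtain ⟨n, ⟨e⟩⟩ := Finite.exists_equiv_fin α
  exact torsionFree_of_injective (FreeGroup.freeGroupCongr e).toMonoidHom
    (FreeGroup.freeGroupCongr e).injective (freeGroup_fin_torsionFree n)

end HNNTorsion

/-- The single relator of the genus-`g` surface group:
`∏ i, [aᵢ, bᵢ]` where `aᵢ, bᵢ` are the free generators indexed by `Sum.inl i`, `Sum.inr i`. -/
def surfaceRelator (g : ℕ) : FreeGroup (Fin g ⊕ Fin g) :=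
  ((List.finRange g).map fun i =>
    ⁅FreeGroup.of (Sum.inl i : Fin g ⊕ Fin g), FreeGroup.of (Sum.inr i)⁆).prod

/-- The genus-`g` surface group `π_g`, presented with generators `a₁,…,a_g,b₁,…,b_g`
and the single relator `∏ i, [aᵢ, bᵢ]`. -/
def SurfaceGroup (g : ℕ) : Type :=
  PresentedGroup ({surfaceRelator g} : Set (FreeGroup (Fin g ⊕ Fin g)))

instance (g : ℕ) : Group (SurfaceGroup g) := by unfold SurfaceGroup; infer_instance


namespace SurfaceTF
open HNNTorsion

/-- `ℤ ≃* zpowers x` for `x` with injective integer powers -/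
noncomputable def zpowEquiv {H : Type*} [Group H] (x : H)
    (hx : Function.Injective fun n : ℤ => x ^ n) :
    Multiplicative ℤ ≃* Subgroup.zpowers x := by
  refine MulEquiv.ofBijective (zpowersHom (Subgroup.zpowers x) ⟨x, mem_zpowers x⟩) ⟨?_, ?_⟩
  · intro a b hab
    have h3 : x ^ a.toAdd = x ^ b.toAdd := by
      have := congrArg (Subtype.val) hab
      simpa [zpowersHom_apply] using this
    have := hx h3
    exact Multiplicative.toAdd.injective this
  · rintro ⟨z, n, rfl⟩
    exact ⟨Multiplicative.ofAdd n, Subtype.ext (by simp [zpowersHom_apply])⟩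

theorem zpowEquiv_apply_coe {H : Type*} [Group H] (x : H)
    (hx : Function.Injective fun n : ℤ => x ^ n) (n : ℤ) :
    ((zpowEquiv x hx (Multiplicative.ofAdd n) : Subgroup.zpowers x) : H) = x ^ n := by
  show (((zpowersHom (Subgroup.zpowers x) ⟨x, mem_zpowers x⟩) (Multiplicative.ofAdd n) :
    Subgroup.zpowers x) : H) = x ^ n
  simp [zpowersHom_apply]

theorem zpowEquiv_symm_apply {H : Type*} [Group H] (x : H)
    (hx : Function.Injective fun n : ℤ => x ^ n) (n : ℤ) :
    (zpowEquiv x hx).symm ⟨x ^ n, zpow_mem (mem_zpowers x) n⟩ = Multiplicative.ofAdd n := by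
  rw [MulEquiv.symm_apply_eq]
  exact Subtype.ext (zpowEquiv_apply_coe x hx n).symm

variable (m : ℕ)

abbrev X (m : ℕ) := Fin (m + 1) ⊕ Fin (m + 2)

def xx : FreeGroup (X m) := FreeGroup.of (Sum.inr 0)

def cc : FreeGroup (X m) :=
  ((List.finRange (m + 1)).map fun j =>
    ⁅FreeGroup.of (Sum.inl j : X m), FreeGroup.of (Sum.inr j.succ)⁆).prod

def yy : FreeGroup (X m) := (cc m)⁻¹ * xx m

def ε : FreeGroup (X m) →* Multiplicative ℤ :=
  FreeGroup.lift (fun ξ => if ξ = Sum.inr 0 then Multiplicative.ofAdd (1 : ℤ) else 1)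

theorem ε_xx : ε m (xx m) = Multiplicative.ofAdd (1 : ℤ) := by simp [ε, xx]

theorem ε_cc : ε m (cc m) = 1 := by
  unfold cc
  rw [map_list_prod, List.map_map]
  apply List.prod_eq_one
  intro a ha
  simp only [List.mem_map] at ha
  obtain ⟨j, _, rfl⟩ := ha
  simp only [Function.comp_apply, map_commutatorElement]
  exact commutatorElement_eq_one_iff_mul_comm.2 (mul_comm _ _)

theorem ε_yy : ε m (yy m) = Multiplicative.ofAdd (1 : ℤ) := by
  rw [yy, map_mul, map_inv, ε_cc, ε_xx, inv_one, one_mul]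

theorem zpow_inj_of_ε {w : FreeGroup (X m)} (hw : ε m w = Multiplicative.ofAdd (1 : ℤ)) :
    Function.Injective fun n : ℤ => w ^ n := by
  intro a b hab
  have h1 : ε m (w ^ a) = ε m (w ^ b) := by simpa using congrArg (ε m) hab
  rw [map_zpow, map_zpow, hw] at h1
  have : Multiplicative.ofAdd (a • (1 : ℤ)) = Multiplicative.ofAdd (b • (1 : ℤ)) := by
    rw [ofAdd_zsmul, ofAdd_zsmul]; exact h1
  simpa using Multiplicative.ofAdd.injective this

theorem xx_zpow_inj : Function.Injective fun n : ℤ => (xx m) ^ n :=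
  zpow_inj_of_ε m (ε_xx m)

theorem yy_zpow_inj : Function.Injective fun n : ℤ => (yy m) ^ n :=
  zpow_inj_of_ε m (ε_yy m)

noncomputable def φm : Subgroup.zpowers (xx m) ≃* Subgroup.zpowers (yy m) :=
  (zpowEquiv (xx m) (xx_zpow_inj m)).symm.trans (zpowEquiv (yy m) (yy_zpow_inj m))

theorem φm_apply_coe (n : ℤ) :
    ((φm m ⟨(xx m) ^ n, zpow_mem (mem_zpowers _) n⟩ : Subgroup.zpowers (yy m)) :
      FreeGroup (X m)) = (yy m) ^ n := by
  rw [φm, MulEquiv.trans_apply, zpowEquiv_symm_apply, zpowEquiv_apply_coe]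

/-- the HNN extension that the surface group embeds in -/
abbrev HNNm := HNNExtension (FreeGroup (X m)) (Subgroup.zpowers (xx m))
  (Subgroup.zpowers (yy m)) (φm m)

open HNNExtension

noncomputable def fgen : Fin (m + 2) ⊕ Fin (m + 2) → HNNm m
  | Sum.inl i => Fin.cases t (fun j => of (FreeGroup.of (Sum.inl j))) i
  | Sum.inr i => of (FreeGroup.of (Sum.inr i))

theorem lift_surfaceRelator {H : Type*} [Group H] (f : Fin (m + 2) ⊕ Fin (m + 2) → H) :
    FreeGroup.lift f (surfaceRelator (m + 2)) =
      ⁅f (Sum.inl 0), f (Sum.inr 0)⁆ *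
        ((List.finRange (m + 1)).map fun j => ⁅f (Sum.inl j.succ), f (Sum.inr j.succ)⁆).prod := by
  unfold surfaceRelator
  rw [map_list_prod, List.map_map, List.finRange_succ, List.map_cons, List.prod_cons,
    List.map_map]
  congr 1
  · simp [Function.comp, map_commutatorElement]
  · refine congrArg List.prod ?_
    apply List.map_congr_left
    intro j _
    simp [Function.comp, map_commutatorElement]

theorem t_conj_xx : (t : HNNm m) * of (xx m) * t⁻¹ = of (yy m) := by
  have h1 := HNNExtension.equiv_eq_conj (φ := φm m) ⟨xx m, mem_zpowers _⟩
  have h2 : ((φm m ⟨xx m, mem_zpowers _⟩ : Subgroup.zpowers (yy m)) : FreeGroup (X m))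
      = yy m := by
    have h3 : (⟨xx m, mem_zpowers _⟩ : Subgroup.zpowers (xx m))
        = ⟨(xx m) ^ (1 : ℤ), zpow_mem (mem_zpowers _) 1⟩ := Subtype.ext (by simp)
    rw [h3, φm_apply_coe]
    simp
  rw [h2] at h1
  exact h1.symm

theorem hrel : ∀ r ∈ ({surfaceRelator (m + 2)} : Set (FreeGroup (Fin (m + 2) ⊕ Fin (m + 2)))),
    FreeGroup.lift (fgen m) r = 1 := by
  intro r hr
  rw [Set.mem_singleton_iff] at hr
  subst hr
  rw [lift_surfaceRelator]
  have hc : ((List.finRange (m + 1)).map fun j =>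
      ⁅fgen m (Sum.inl j.succ), fgen m (Sum.inr j.succ)⁆).prod = of (cc m) := by
    rw [cc, map_list_prod, List.map_map]
    refine congrArg List.prod ?_
    apply List.map_congr_left
    intro j _
    simp only [Function.comp_apply, map_commutatorElement]
    rfl
  rw [hc]
  have h0 : fgen m (Sum.inl 0) = (t : HNNm m) := rfl
  have h1 : fgen m (Sum.inr 0) = of (xx m) := rfl
  rw [h0, h1]
  calc ⁅(t : HNNm m), of (xx m)⁆ * of (cc m)
      = (t * of (xx m) * t⁻¹) * ((of (xx m))⁻¹ * of (cc m)) := by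
        rw [commutatorElement_def]; group
    _ = of (yy m) * ((of (xx m))⁻¹ * of (cc m)) := by rw [t_conj_xx]
    _ = of (yy m * ((xx m)⁻¹ * cc m)) := by rw [map_mul, map_mul, map_inv]
    _ = of 1 := by unfold yy; congr 1; group
    _ = 1 := map_one _


/-- the forward map from the surface group into the HNN extension -/
noncomputable def Φm : SurfaceGroup (m + 2) →* HNNm m :=
  PresentedGroup.toGroup (hrel m)

-- the generators of the surface group
def aP (i : Fin (m + 2)) : SurfaceGroup (m + 2) := PresentedGroup.of (Sum.inl i)
def bP (i : Fin (m + 2)) : SurfaceGroup (m + 2) := PresentedGroup.of (Sum.inr i)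

def CP : SurfaceGroup (m + 2) :=
  ((List.finRange (m + 1)).map fun j => ⁅aP m j.succ, bP m j.succ⁆).prod

theorem relator_eq_one :
    ⁅aP m 0, bP m 0⁆ * CP m = 1 := by
  have hmk : (PresentedGroup.mk {surfaceRelator (m + 2)} (surfaceRelator (m + 2)) :
      SurfaceGroup (m + 2)) = 1 :=
    (QuotientGroup.eq_one_iff _).2 (Subgroup.subset_normalClosure (Set.mem_singleton _))
  have hmk2 : (PresentedGroup.mk {surfaceRelator (m + 2)} :
      FreeGroup (Fin (m + 2) ⊕ Fin (m + 2)) →* SurfaceGroup (m + 2))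
      = FreeGroup.lift (fun ξ => PresentedGroup.of ξ) := by
    apply FreeGroup.ext_hom
    intro ξ
    rfl
  rw [hmk2] at hmk
  rw [lift_surfaceRelator] at hmk
  exact hmk

def fb : X m → SurfaceGroup (m + 2) :=
  Sum.elim (fun j => aP m j.succ) (fun i => bP m i)

def Fbase : FreeGroup (X m) →* SurfaceGroup (m + 2) := FreeGroup.lift (fb m)

theorem Fbase_xx : Fbase m (xx m) = bP m 0 := by simp [Fbase, xx, fb]

theorem Fbase_cc : Fbase m (cc m) = CP m := by
  rw [Fbase, cc, map_list_prod, List.map_map, CP]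
  refine congrArg List.prod ?_
  apply List.map_congr_left
  intro j _
  simp only [Function.comp_apply, map_commutatorElement]
  rfl

theorem Fbase_yy : Fbase m (yy m) = (CP m)⁻¹ * bP m 0 := by
  rw [yy, map_mul, map_inv, Fbase_cc, Fbase_xx]

theorem base_conj : aP m 0 * bP m 0 * (aP m 0)⁻¹ = (CP m)⁻¹ * bP m 0 := by
  have h1 : ⁅aP m 0, bP m 0⁆ = (CP m)⁻¹ :=
    eq_inv_of_mul_eq_one_left (relator_eq_one m)
  rw [commutatorElement_def] at h1
  rw [← h1]
  group

theorem hcond : ∀ a : Subgroup.zpowers (xx m),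
    aP m 0 * Fbase m ↑a = Fbase m ↑(φm m a) * aP m 0 := by
  intro a
  obtain ⟨n, hn⟩ := Subgroup.mem_zpowers_iff.1 a.2
  have ha : a = ⟨(xx m) ^ n, zpow_mem (mem_zpowers _) n⟩ := Subtype.ext hn.symm
  subst ha
  rw [φm_apply_coe, map_zpow, map_zpow, Fbase_xx, Fbase_yy, ← base_conj]
  rw [conj_zpow]
  group

noncomputable def Ψm : HNNm m →* SurfaceGroup (m + 2) :=
  HNNExtension.lift (Fbase m) (aP m 0) (hcond m)

theorem left_inverse_ΨΦ : (Ψm m).comp (Φm m) = MonoidHom.id _ := by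
  apply PresentedGroup.ext
  rintro (i | i)
  · induction i using Fin.cases with
    | zero =>
      show Ψm m (Φm m (aP m 0)) = aP m 0
      have h1 : Φm m (aP m 0) = fgen m (Sum.inl 0) := PresentedGroup.toGroup.of _
      rw [h1]
      show Ψm m t = aP m 0
      simp [Ψm]
    | succ j =>
      show Ψm m (Φm m (aP m j.succ)) = aP m j.succ
      have h1 : Φm m (aP m j.succ) = fgen m (Sum.inl j.succ) := PresentedGroup.toGroup.of _
      rw [h1]
      show Ψm m (HNNExtension.of (FreeGroup.of (Sum.inl j))) = aP m j.succ
      simp [Ψm, Fbase, fb]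
  · show Ψm m (Φm m (bP m i)) = bP m i
    have h1 : Φm m (bP m i) = fgen m (Sum.inr i) := PresentedGroup.toGroup.of _
    rw [h1]
    show Ψm m (HNNExtension.of (FreeGroup.of (Sum.inr i))) = bP m i
    simp [Ψm, Fbase, fb]

theorem Φm_injective : Function.Injective (Φm m) := by
  intro x y hxy
  have h1 : (Ψm m).comp (Φm m) x = (Ψm m).comp (Φm m) y := by
    simp only [MonoidHom.comp_apply, hxy]
  rwa [left_inverse_ΨΦ] at h1

theorem surfaceGroup_torsionFree : Monoid.IsTorsionFree (SurfaceGroup (m + 2)) :=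
  HNNTorsion.torsionFree_of_injective (Φm m) (Φm_injective m)
    (HNNTorsion.hnn_torsionFree (HNNTorsion.freeGroup_torsionFree (X m)))

end SurfaceTF

/-- For `g ≥ 2`, the level of a nontrivial element of the genus-`g` surface group is a
conjugacy invariant: if `h₁` and `h₂` are conjugate nontrivial elements whose centralizers
are generated by `k₁` and `k₂` respectively, and `h₁ = k₁ ^ l₁`, `h₂ = k₂ ^ l₂`,
then `|l₁| = |l₂|`. -/
theorem level_conj_invariant (g : ℕ) (hg : 2 ≤ g)
    (h₁ h₂ k₁ k₂ : SurfaceGroup g) (hh₁ : h₁ ≠ 1) (hh₂ : h₂ ≠ 1)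
    (hconj : IsConj h₁ h₂)
    (hk₁ : Subgroup.centralizer ({h₁} : Set (SurfaceGroup g)) = Subgroup.zpowers k₁)
    (hk₂ : Subgroup.centralizer ({h₂} : Set (SurfaceGroup g)) = Subgroup.zpowers k₂)
    (l₁ l₂ : ℤ) (hl₁ : h₁ = k₁ ^ l₁) (hl₂ : h₂ = k₂ ^ l₂) :
    |l₁| = |l₂| := by
  obtain ⟨m, rfl⟩ : ∃ m, g = m + 2 := ⟨g - 2, by omega⟩
  have htf : Monoid.IsTorsionFree (SurfaceGroup (m + 2)) := SurfaceTF.surfaceGroup_torsionFree m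
  -- k₂ is nontrivial
  have hh₂mem : h₂ ∈ Subgroup.zpowers k₂ := by
    rw [← hk₂]
    exact Subgroup.mem_centralizer_iff.2 (by rintro y (rfl : y = h₂); rfl)
  have hk₂ne : k₂ ≠ 1 := by
    rintro rfl
    rw [Subgroup.zpowers_one_eq_bot] at hh₂mem
    exact hh₂ (Subgroup.mem_bot.1 hh₂mem)
  have hzinj : Function.Injective fun n : ℤ => k₂ ^ n :=
    injective_zpow_iff_not_isOfFinOrder.2 (htf k₂ hk₂ne)
  obtain ⟨u, hu⟩ := isConj_iff.1 hconj
  set K := u * k₁ * u⁻¹ with hK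
  -- k₁ commutes with h₁
  have hcomm1 : h₁ * k₁ = k₁ * h₁ := by
    have hmem : k₁ ∈ Subgroup.centralizer ({h₁} : Set (SurfaceGroup (m + 2))) := by
      rw [hk₁]; exact Subgroup.mem_zpowers k₁
    exact Subgroup.mem_centralizer_iff.1 hmem h₁ rfl
  -- K commutes with h₂
  have hcomm2 : h₂ * K = K * h₂ := by
    rw [← hu, hK]
    calc (u * h₁ * u⁻¹) * (u * k₁ * u⁻¹) = u * (h₁ * k₁) * u⁻¹ := by group
      _ = u * (k₁ * h₁) * u⁻¹ := by rw [hcomm1]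
      _ = (u * k₁ * u⁻¹) * (u * h₁ * u⁻¹) := by group
  -- zpowers K = zpowers k₂
  have hzpK : Subgroup.zpowers K = Subgroup.zpowers k₂ := by
    rw [← hk₂]
    ext z
    constructor
    · intro hzmem
      rw [Subgroup.mem_zpowers_iff] at hzmem
      obtain ⟨n, rfl⟩ := hzmem
      rw [Subgroup.mem_centralizer_iff]
      intro y hy
      rw [Set.eq_of_mem_singleton hy]
      exact Commute.zpow_right hcomm2 n
    · intro hz
      have hz2 : h₂ * z = z * h₂ := Subgroup.mem_centralizer_iff.1 hz h₂ rfl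
      have hmem : u⁻¹ * z * u ∈ Subgroup.centralizer ({h₁} : Set (SurfaceGroup (m + 2))) := by
        rw [Subgroup.mem_centralizer_iff]
        intro y hy
        rw [Set.eq_of_mem_singleton hy]
        have hh₁u : h₁ = u⁻¹ * h₂ * u := by rw [← hu]; group
        calc h₁ * (u⁻¹ * z * u) = u⁻¹ * (h₂ * z) * u := by rw [hh₁u]; group
          _ = u⁻¹ * (z * h₂) * u := by rw [hz2]
          _ = (u⁻¹ * z * u) * h₁ := by rw [hh₁u]; group
      rw [hk₁, Subgroup.mem_zpowers_iff] at hmem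
      obtain ⟨n, hn⟩ := hmem
      rw [Subgroup.mem_zpowers_iff]
      refine ⟨n, ?_⟩
      show K ^ n = z
      rw [hK, conj_zpow, hn]
      group
  -- K = k₂ ^ s with s = ±1
  have hKmem : K ∈ Subgroup.zpowers k₂ := hzpK ▸ Subgroup.mem_zpowers K
  have hk₂mem : k₂ ∈ Subgroup.zpowers K := hzpK.symm ▸ Subgroup.mem_zpowers k₂
  rw [Subgroup.mem_zpowers_iff] at hKmem hk₂mem
  obtain ⟨s, hs⟩ := hKmem
  obtain ⟨r, hr⟩ := hk₂mem
  have hsr : s * r = 1 := by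
    have h1 : k₂ ^ (s * r) = k₂ ^ (1 : ℤ) := by
      rw [zpow_mul, hs, hr, zpow_one]
    exact hzinj h1
  have habs : |s| = 1 := by
    rcases Int.mul_eq_one_iff_eq_one_or_neg_one.1 hsr with ⟨rfl, _⟩ | ⟨rfl, _⟩ <;> rfl
  -- h₂ = K ^ l₁ = k₂ ^ (s * l₁)
  have hh₂K : h₂ = k₂ ^ (s * l₁) := by
    rw [← hu, hl₁, zpow_mul, hs]
    rw [hK, conj_zpow]
  have hl : s * l₁ = l₂ := hzinj (show k₂ ^ (s * l₁) = k₂ ^ l₂ by rw [← hh₂K, ← hl₂])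
  calc |l₁| = |s| * |l₁| := by rw [habs, one_mul]
    _ = |s * l₁| := (abs_mul s l₁).symm
    _ = |l₂| := by rw [hl]
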